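/- Let A be an n×n real symmetric positive definite matrix with energy decomposition ℰ = {E_k}_{k=1}^m and let 𝒫 = {P_j}_{j=1}^M be a partition of {1,…,n}. For each j, let Φ_j be a subspace of the coordinate subspace span{e_i : i ∈ P_j}, and suppose ‖x − P_{Φ_j} x‖₂ ≤ ε √(xᵀ underline(A)_{P_j} x) for all x ∈ span{e_i : i ∈ P_j}, for some ε > 0, where P_{Φ_j} is the Euclidean orthogonal projection onto Φ_j. Then, with Φ = ⊕_{j=1}^M Φ_j and P_Φ the Euclidean orthogonal projection onto Φ, one has ‖x − P_Φ x‖₂ ≤ ε‖x‖_A for all x ∈ ℝⁿ. -/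

import Mathlib

open Matrix BigOperators
open scoped Classical

noncomputable section

/-- The 0/1 diagonal projection matrix onto the coordinates in `S`. -/
def projSet {n : ℕ} (S : Finset (Fin n)) : Matrix (Fin n) (Fin n) ℝ :=
  Matrix.diagonal (fun i => if i ∈ S then (1:ℝ) else 0)

/-- The diagonal concentration `E^d` of `E`: diagonal with entries `∑_j |E_{ij}|`. -/
def diagConc {n : ℕ} (E : Matrix (Fin n) (Fin n) ℝ) : Matrix (Fin n) (Fin n) ℝ :=
  Matrix.diagonal (fun i => ∑ j, |E i j|)

/-- `E` is interior to `S` if `P_S E P_S = E`. -/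
def InteriorTo {n : ℕ} (E : Matrix (Fin n) (Fin n) ℝ) (S : Finset (Fin n)) : Prop :=
  projSet S * E * projSet S = E

/-- The interior energy `underline(A)_S = ∑_{E_k interior to S} E_k`. -/
def interiorEnergy {n m : ℕ} (E : Fin m → Matrix (Fin n) (Fin n) ℝ) (S : Finset (Fin n)) :
    Matrix (Fin n) (Fin n) ℝ :=
  ∑ k, if InteriorTo (E k) S then E k else 0

/-- The closed energy
`overline(A)_S = underline(A)_S + ∑_{E_k not interior to S} P_S E_k^d P_S`. -/
def closedEnergy {n m : ℕ} (E : Fin m → Matrix (Fin n) (Fin n) ℝ) (S : Finset (Fin n)) :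
    Matrix (Fin n) (Fin n) ℝ :=
  interiorEnergy E S +
    ∑ k, if InteriorTo (E k) S then 0 else projSet S * diagConc (E k) * projSet S

/-- A partition of `{1,…,n}` into pairwise disjoint nonempty subsets covering everything. -/
def IsPartition {n M : ℕ} (P : Fin M → Finset (Fin n)) : Prop :=
  (∀ j, (P j).Nonempty) ∧ (∀ j j', j ≠ j' → Disjoint (P j) (P j')) ∧
    Finset.univ.biUnion P = Finset.univ

/-- Euclidean norm of a vector. -/
def norm2 {ι : Type} [Fintype ι] (x : ι → ℝ) : ℝ := Real.sqrt (x ⬝ᵥ x)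

/-- `A`-energy norm of a vector: `‖x‖_A = √(xᵀ A x)`. -/
def normA {ι : Type} [Fintype ι] (A : Matrix ι ι ℝ) (x : ι → ℝ) : ℝ :=
  Real.sqrt (x ⬝ᵥ A.mulVec x)

/-- Spectral (ℓ²-operator) norm of a square real matrix. -/
def specNorm {ι : Type} [Fintype ι] [DecidableEq ι] (B : Matrix ι ι ℝ) : ℝ :=
  ‖Matrix.toEuclideanCLM (𝕜 := ℝ) B‖

/-- Smallest value of the Rayleigh quotient; for a symmetric matrix this is the
smallest eigenvalue. -/
def lamMin {ι : Type} [Fintype ι] (B : Matrix ι ι ℝ) : ℝ :=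
  sInf {r : ℝ | ∃ x : ι → ℝ, x ⬝ᵥ x = 1 ∧ r = x ⬝ᵥ B.mulVec x}

/-- Largest value of the Rayleigh quotient; for a symmetric matrix this is the
largest eigenvalue. -/
def lamMax {ι : Type} [Fintype ι] (B : Matrix ι ι ℝ) : ℝ :=
  sSup {r : ℝ | ∃ x : ι → ℝ, x ⬝ᵥ x = 1 ∧ r = x ⬝ᵥ B.mulVec x}

/-- Patch layers: `S_0(P_j) = P_j` and `S_{k+1}(P_j)` adds all patches `P_{j'}` such that
some energy element has a nonzero row indexed in `P_{j'}` and a nonzero row indexed in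
`S_k(P_j)`. -/
def layer {n m M : ℕ} (E : Fin m → Matrix (Fin n) (Fin n) ℝ) (P : Fin M → Finset (Fin n))
    (j : Fin M) : ℕ → Finset (Fin n)
  | 0 => P j
  | (k+1) => layer E P j k ∪ Finset.univ.biUnion (fun j' =>
      if (∃ l, (∃ r ∈ P j', (E l) r ≠ 0) ∧ (∃ r ∈ layer E P j k, (E l) r ≠ 0))
      then P j' else ∅)

/-- Condition factor `δ(P_j) = ‖(Φ̂_jᵀ (overline(A)_{P_j}|_{P_j})⁻¹ Φ̂_j)⁻¹‖₂`, where
`Φ̂_j` is the submatrix of `Φ_j` on the rows in `P_j` and `overline(A)_{P_j}|_{P_j}` is the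
submatrix of the closed energy on the rows and columns in `P_j`. -/
def condFactor {n m : ℕ} (E : Fin m → Matrix (Fin n) (Fin n) ℝ) (S : Finset (Fin n))
    {qj : ℕ} (Φj : Matrix (Fin n) (Fin qj) ℝ) : ℝ :=
  specNorm ((((Φj.submatrix (Subtype.val : {i // i ∈ S} → Fin n) id))ᵀ *
      ((closedEnergy E S).submatrix (Subtype.val : {i // i ∈ S} → Fin n) Subtype.val)⁻¹ *
      (Φj.submatrix (Subtype.val : {i // i ∈ S} → Fin n) id))⁻¹)

/-- The combined matrix `Φ = [Φ_1 ⋯ Φ_M]`, with columns indexed by pairs `⟨j, c⟩`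
(column `c` of the block `Φ_j`). -/
def bigPhi {n M : ℕ} (q : Fin M → ℕ) (Φ : (j : Fin M) → Matrix (Fin n) (Fin (q j)) ℝ) :
    Matrix (Fin n) ((j : Fin M) × Fin (q j)) ℝ :=
  fun r c => Φ c.1 r c.2

/-- `ψ` is a minimizer of `‖x‖_A` over vectors supported in `S` subject to `Φᵀ x = e_i`. -/
def IsMinimizerOn {n : ℕ} {ι : Type} [Fintype ι] [DecidableEq ι]
    (A : Matrix (Fin n) (Fin n) ℝ) (Φ : Matrix (Fin n) ι ℝ) (S : Finset (Fin n)) (i : ι)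
    (ψ : Fin n → ℝ) : Prop :=
  (∀ r, r ∉ S → ψ r = 0) ∧ Φᵀ.mulVec ψ = Pi.single i 1 ∧
    ∀ x : Fin n → ℝ, (∀ r, r ∉ S → x r = 0) → Φᵀ.mulVec x = Pi.single i 1 →
      ψ ⬝ᵥ A.mulVec ψ ≤ x ⬝ᵥ A.mulVec x

/-- `α(P_j)`: the largest value of `(xᵀ overline(A)_{P_j} x)/(xᵀ underline(A)_{P_j} x)`
over nonzero `x` in the column span of `U_j`. -/
def alphaFactor {n m : ℕ} (E : Fin m → Matrix (Fin n) (Fin n) ℝ) (S : Finset (Fin n))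
    {uj : ℕ} (Uj : Matrix (Fin n) (Fin uj) ℝ) : ℝ :=
  sSup {r : ℝ | ∃ x ∈ Submodule.span ℝ (Set.range Ujᵀ), x ≠ 0 ∧
    r = (x ⬝ᵥ (closedEnergy E S).mulVec x) / (x ⬝ᵥ (interiorEnergy E S).mulVec x)}

/-- The coordinate subspace `span{e_i : i ∈ S}` of `ℝⁿ`: vectors vanishing outside `S`. -/
def coordSubspace {n : ℕ} (S : Finset (Fin n)) : Submodule ℝ (Fin n → ℝ) where
  carrier := {x | ∀ i, i ∉ S → x i = 0}
  add_mem' := by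
    intro a b ha hb i hi
    simp only [Pi.add_apply, ha i hi, hb i hi, add_zero]
  zero_mem' := by intro i _; rfl
  smul_mem' := by
    intro c x hx i hi
    simp [hx i hi]


/-! ### Auxiliary lemmas -/

lemma dot_self_nonneg' {n : ℕ} (x : Fin n → ℝ) : 0 ≤ x ⬝ᵥ x :=
  Finset.sum_nonneg fun i _ => mul_self_nonneg _

lemma psd_quad_nonneg {n : ℕ} {B : Matrix (Fin n) (Fin n) ℝ} (h : B.PosSemidef)
    (x : Fin n → ℝ) : 0 ≤ x ⬝ᵥ B.mulVec x := by
  have := h.dotProduct_mulVec_nonneg x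
  simpa using this

lemma sum_dot' {n M : ℕ} (v : Fin M → Fin n → ℝ) (w : Fin n → ℝ) :
    (∑ j, v j) ⬝ᵥ w = ∑ j, v j ⬝ᵥ w := by
  simp only [dotProduct, Finset.sum_apply, Finset.sum_mul]
  exact Finset.sum_comm

lemma dot_sum' {n M : ℕ} (w : Fin n → ℝ) (v : Fin M → Fin n → ℝ) :
    w ⬝ᵥ (∑ j, v j) = ∑ j, w ⬝ᵥ v j := by
  simp only [dotProduct, Finset.sum_apply, Finset.mul_sum]
  exact Finset.sum_comm

lemma sum_mulVec' {n M : ℕ} (B : Fin M → Matrix (Fin n) (Fin n) ℝ) (w : Fin n → ℝ) :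
    (∑ j, B j).mulVec w = ∑ j, (B j).mulVec w := by
  ext i
  simp only [Matrix.mulVec, dotProduct, Finset.sum_apply, Matrix.sum_apply, Finset.sum_mul]
  exact Finset.sum_comm

lemma projSet_mulVec {n : ℕ} (S : Finset (Fin n)) (x : Fin n → ℝ) :
    (projSet S).mulVec x = fun i => if i ∈ S then x i else 0 := by
  ext i
  simp [projSet, Matrix.mulVec_diagonal, ite_mul]

lemma dot_projSet_mulVec {n : ℕ} (S : Finset (Fin n)) (x v : Fin n → ℝ) :
    x ⬝ᵥ (projSet S).mulVec v = (fun i => if i ∈ S then x i else 0) ⬝ᵥ v := by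
  simp only [dotProduct, projSet, Matrix.mulVec_diagonal]
  refine Finset.sum_congr rfl fun i _ => ?_
  by_cases h : i ∈ S <;> simp [h]

lemma quad_of_interior {n : ℕ} {Ek : Matrix (Fin n) (Fin n) ℝ} {S : Finset (Fin n)}
    (h : InteriorTo Ek S) (x : Fin n → ℝ) :
    x ⬝ᵥ Ek.mulVec x =
      (fun i => if i ∈ S then x i else 0) ⬝ᵥ
        Ek.mulVec (fun i => if i ∈ S then x i else 0) := by
  conv_lhs => rw [← h]
  have h1 : (projSet S * Ek * projSet S).mulVec x
      = (projSet S).mulVec (Ek.mulVec ((projSet S).mulVec x)) := by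
    rw [Matrix.mulVec_mulVec, Matrix.mulVec_mulVec]
  rw [h1, dot_projSet_mulVec, projSet_mulVec]

lemma interior_disjoint_zero {n : ℕ} {Ek : Matrix (Fin n) (Fin n) ℝ} {S S' : Finset (Fin n)}
    (h : InteriorTo Ek S) (h' : InteriorTo Ek S') (hd : Disjoint S S') : Ek = 0 := by
  have key : ∀ (T T' : Finset (Fin n)), Disjoint T T' → projSet T * projSet T' = 0 := by
    intro T T' hdd
    rw [projSet, projSet, Matrix.diagonal_mul_diagonal]
    ext i j
    rw [Matrix.diagonal_apply]
    by_cases hij : i = j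
    · rw [if_pos hij]
      by_cases hi : i ∈ T
      · have h2 : i ∉ T' := Finset.disjoint_left.mp hdd hi
        simp [Pi.mul_apply, hi, h2]
      · simp [Pi.mul_apply, hi]
    · simp [hij]
  have hps : projSet S * projSet S' = 0 := key S S' hd
  have hps' : projSet S' * projSet S = 0 := key S' S hd.symm
  calc Ek = projSet S * Ek * projSet S := h.symm
    _ = projSet S * (projSet S' * Ek * projSet S') * projSet S := by rw [h']
    _ = (projSet S * projSet S') * Ek * (projSet S' * projSet S) := by
        simp only [Matrix.mul_assoc]
    _ = 0 := by rw [hps, hps', Matrix.zero_mul, Matrix.mul_zero]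

lemma interiorEnergy_quad_nonneg {n m : ℕ} (E : Fin m → Matrix (Fin n) (Fin n) ℝ)
    (hE : ∀ k, (E k).PosSemidef) (S : Finset (Fin n)) (x : Fin n → ℝ) :
    0 ≤ x ⬝ᵥ (interiorEnergy E S).mulVec x := by
  unfold interiorEnergy
  rw [sum_mulVec', dot_sum']
  refine Finset.sum_nonneg fun k _ => ?_
  by_cases h : InteriorTo (E k) S
  · simpa [h] using psd_quad_nonneg (hE k) x
  · simp [h]

/-- Local-to-global accuracy: if on every patch `P_j` the local space
`Φ_j ⊆ span{e_i : i ∈ P_j}` satisfies `‖x − P_{Φ_j} x‖₂ ≤ ε √(xᵀ underline(A)_{P_j} x)`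
for all `x ∈ span{e_i : i ∈ P_j}`, then with `Φ = ⊕_j Φ_j`,
`‖x − P_Φ x‖₂ ≤ ε ‖x‖_A` for all `x ∈ ℝⁿ`. -/
theorem global_accuracy_of_local_accuracy {n m M : ℕ}
    (A : Matrix (Fin n) (Fin n) ℝ) (hA : A.PosDef)
    (E : Fin m → Matrix (Fin n) (Fin n) ℝ) (hE : ∀ k, (E k).PosSemidef)
    (hsum : A = ∑ k, E k)
    (P : Fin M → Finset (Fin n)) (hP : IsPartition P)
    (Φj : Fin M → Submodule ℝ (Fin n → ℝ)) (hΦj : ∀ j, Φj j ≤ coordSubspace (P j))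
    (pΦj : Fin M → (Fin n → ℝ) → (Fin n → ℝ))
    (hpΦj : ∀ j x, pΦj j x ∈ Φj j ∧ ∀ y ∈ Φj j, (x - pΦj j x) ⬝ᵥ y = 0)
    (ε : ℝ) (hε : 0 < ε)
    (hlocal : ∀ j, ∀ x ∈ coordSubspace (P j),
      norm2 (x - pΦj j x) ≤ ε * Real.sqrt (x ⬝ᵥ (interiorEnergy E (P j)).mulVec x))
    (pΦ : (Fin n → ℝ) → (Fin n → ℝ))
    (hpΦ : ∀ x, pΦ x ∈ (⨆ j, Φj j) ∧ ∀ y ∈ (⨆ j, Φj j), (x - pΦ x) ⬝ᵥ y = 0) :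
    ∀ x : Fin n → ℝ, norm2 (x - pΦ x) ≤ ε * normA A x := by
  classical
  intro x
  obtain ⟨hne, hdis, hcover⟩ := hP
  set xj : Fin M → Fin n → ℝ := fun j i => if i ∈ P j then x i else 0 with hxjdef
  have hxjmem : ∀ j, xj j ∈ coordSubspace (P j) := by
    intro j i hi; simp [hxjdef, hi]
  have hxsum : x = ∑ j, xj j := by
    ext i
    have hex : ∃ j, i ∈ P j := by
      have : i ∈ Finset.univ.biUnion P := by rw [hcover]; exact Finset.mem_univ i
      simpa [Finset.mem_biUnion] using this
    obtain ⟨j0, hj0⟩ := hex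
    rw [Finset.sum_apply]
    rw [Finset.sum_eq_single j0]
    · simp [hxjdef, hj0]
    · intro j _ hjne
      have : i ∉ P j := fun hij => (Finset.disjoint_left.mp (hdis j j0 hjne) hij) hj0
      simp [hxjdef, this]
    · intro h; exact absurd (Finset.mem_univ j0) h
  set d : Fin M → Fin n → ℝ := fun j => xj j - pΦj j (xj j) with hddef
  have hdsupp : ∀ j i, i ∉ P j → d j i = 0 := by
    intro j i hi
    have h1 : xj j i = 0 := by simp [hxjdef, hi]
    have h2 : pΦj j (xj j) i = 0 := (hΦj j (hpΦj j (xj j)).1) i hi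
    simp [hddef, h1, h2]
  set y : Fin n → ℝ := ∑ j, pΦj j (xj j) with hydef
  have hyΦ : y ∈ ⨆ j, Φj j :=
    Submodule.sum_mem _ fun j _ => Submodule.mem_iSup_of_mem j (hpΦj j (xj j)).1
  have hxy : x - y = ∑ j, d j := by
    rw [hydef, hddef]
    conv_lhs => rw [hxsum]
    exact (Finset.sum_sub_distrib _ _).symm
  -- Step A : best approximation property
  have hbest : (x - pΦ x) ⬝ᵥ (x - pΦ x) ≤ (x - y) ⬝ᵥ (x - y) := by
    obtain ⟨hmem, horth⟩ := hpΦ x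
    have hef : (x - pΦ x) ⬝ᵥ (pΦ x - y) = 0 :=
      horth _ (Submodule.sub_mem _ hmem hyΦ)
    have hfe : (pΦ x - y) ⬝ᵥ (x - pΦ x) = 0 := by
      rw [dotProduct_comm]; exact hef
    have hsplit : x - y = (x - pΦ x) + (pΦ x - y) := by abel
    rw [hsplit, add_dotProduct, dotProduct_add, dotProduct_add, hef, hfe]
    have := dot_self_nonneg' (pΦ x - y)
    linarith
  -- Step B : orthogonality of the d j
  have hsq : (∑ j, d j) ⬝ᵥ (∑ j, d j) = ∑ j, d j ⬝ᵥ d j := by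
    rw [sum_dot']
    refine Finset.sum_congr rfl fun j _ => ?_
    rw [dot_sum']
    refine Finset.sum_eq_single j (fun j' _ hj' => ?_) (fun h => absurd (Finset.mem_univ j) h)
    refine Finset.sum_eq_zero fun i _ => ?_
    by_cases hi : i ∈ P j
    · have : i ∉ P j' := fun hij => (Finset.disjoint_left.mp (hdis j' j hj') hij) hi
      rw [hdsupp j' i this, mul_zero]
    · rw [hdsupp j i hi, zero_mul]
  -- Step C : local estimates squared
  have hloc : ∀ j, d j ⬝ᵥ d j ≤ ε ^ 2 * (xj j ⬝ᵥ (interiorEnergy E (P j)).mulVec (xj j)) := by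
    intro j
    have h1 := hlocal j (xj j) (hxjmem j)
    have hq : 0 ≤ xj j ⬝ᵥ (interiorEnergy E (P j)).mulVec (xj j) :=
      interiorEnergy_quad_nonneg E hE (P j) (xj j)
    unfold norm2 at h1
    have h2 := mul_self_le_mul_self (Real.sqrt_nonneg _) h1
    rw [Real.mul_self_sqrt (dot_self_nonneg' _)] at h2
    calc d j ⬝ᵥ d j
        ≤ ε * Real.sqrt (xj j ⬝ᵥ (interiorEnergy E (P j)).mulVec (xj j)) *
          (ε * Real.sqrt (xj j ⬝ᵥ (interiorEnergy E (P j)).mulVec (xj j))) := h2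
      _ = ε ^ 2 * (Real.sqrt (xj j ⬝ᵥ (interiorEnergy E (P j)).mulVec (xj j)) *
          Real.sqrt (xj j ⬝ᵥ (interiorEnergy E (P j)).mulVec (xj j))) := by ring
      _ = ε ^ 2 * (xj j ⬝ᵥ (interiorEnergy E (P j)).mulVec (xj j)) := by
          rw [Real.mul_self_sqrt hq]
  -- Step D : sum of interior energies bounded by total energy
  have hglob : ∑ j, xj j ⬝ᵥ (interiorEnergy E (P j)).mulVec (xj j) ≤ x ⬝ᵥ A.mulVec x := by
    have hterm : ∀ j, xj j ⬝ᵥ (interiorEnergy E (P j)).mulVec (xj j)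
        = ∑ k, if InteriorTo (E k) (P j) then x ⬝ᵥ (E k).mulVec x else 0 := by
      intro j
      unfold interiorEnergy
      rw [sum_mulVec', dot_sum']
      refine Finset.sum_congr rfl fun k _ => ?_
      by_cases h : InteriorTo (E k) (P j)
      · rw [if_pos h, if_pos h, quad_of_interior h x]
      · simp [h]
    have hA : x ⬝ᵥ A.mulVec x = ∑ k, x ⬝ᵥ (E k).mulVec x := by
      rw [hsum, sum_mulVec', dot_sum']
    rw [hA]
    calc ∑ j, xj j ⬝ᵥ (interiorEnergy E (P j)).mulVec (xj j)
        = ∑ j, ∑ k, if InteriorTo (E k) (P j) then x ⬝ᵥ (E k).mulVec x else 0 :=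
          Finset.sum_congr rfl fun j _ => hterm j
      _ = ∑ k, ∑ j, if InteriorTo (E k) (P j) then x ⬝ᵥ (E k).mulVec x else 0 :=
          Finset.sum_comm
      _ ≤ ∑ k, x ⬝ᵥ (E k).mulVec x := by
          refine Finset.sum_le_sum fun k _ => ?_
          by_cases h0 : E k = 0
          · simp [h0]
          · have hcard : (Finset.univ.filter (fun j => InteriorTo (E k) (P j))).card ≤ 1 := by
              refine Finset.card_le_one.mpr fun a ha b hb => ?_
              by_contra hab
              exact h0 (interior_disjoint_zero (Finset.mem_filter.mp ha).2
                (Finset.mem_filter.mp hb).2 (hdis a b hab))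
            have hc : 0 ≤ x ⬝ᵥ (E k).mulVec x := psd_quad_nonneg (hE k) x
            calc (∑ j, if InteriorTo (E k) (P j) then x ⬝ᵥ (E k).mulVec x else 0)
                = ∑ j ∈ Finset.univ.filter (fun j => InteriorTo (E k) (P j)),
                    x ⬝ᵥ (E k).mulVec x := (Finset.sum_filter _ _).symm
              _ = (Finset.univ.filter (fun j => InteriorTo (E k) (P j))).card •
                    (x ⬝ᵥ (E k).mulVec x) := Finset.sum_const _
              _ ≤ 1 * (x ⬝ᵥ (E k).mulVec x) := by
                  rw [nsmul_eq_mul]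
                  exact mul_le_mul_of_nonneg_right (by exact_mod_cast hcard) hc
              _ = x ⬝ᵥ (E k).mulVec x := one_mul _
  -- combine
  have main : (x - pΦ x) ⬝ᵥ (x - pΦ x) ≤ ε ^ 2 * (x ⬝ᵥ A.mulVec x) := by
    calc (x - pΦ x) ⬝ᵥ (x - pΦ x) ≤ (x - y) ⬝ᵥ (x - y) := hbest
      _ = ∑ j, d j ⬝ᵥ d j := by rw [hxy, hsq]
      _ ≤ ∑ j, ε ^ 2 * (xj j ⬝ᵥ (interiorEnergy E (P j)).mulVec (xj j)) :=
          Finset.sum_le_sum fun j _ => hloc j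
      _ = ε ^ 2 * ∑ j, xj j ⬝ᵥ (interiorEnergy E (P j)).mulVec (xj j) :=
          (Finset.mul_sum _ _ _).symm
      _ ≤ ε ^ 2 * (x ⬝ᵥ A.mulVec x) :=
          mul_le_mul_of_nonneg_left hglob (sq_nonneg ε)
  unfold norm2 normA
  have hrw : ε * Real.sqrt (x ⬝ᵥ A.mulVec x) = Real.sqrt (ε ^ 2 * (x ⬝ᵥ A.mulVec x)) := by
    rw [Real.sqrt_mul (sq_nonneg ε), Real.sqrt_sq hε.le]
  rw [hrw]
  exact Real.sqrt_le_sqrt main
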